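/- Let $\Omega \subsetneq \mathbb{R}^n$ be a domain, let $\gamma : [0, \ell] \to \Omega$ be a rectifiable curve parameterized by arc length from $x = \gamma(0)$ to $y = \gamma(\ell)$ which is an $M$-John curve in the sense that $M \, d(\gamma(t), \partial\Omega) \geq t$ for all $t \in [0, \ell]$ and $\ell \leq M \, d(y, \partial\Omega)$, with $M \geq 1$. Suppose $d(x, \partial\Omega) \leq d(y, \partial\Omega)$. Then the quasihyperbolic length of $\gamma$ satisfies $\int_0^{\ell} \frac{dt}{d(\gamma(t), \partial\Omega)} \leq 1 + M^2 + M\log 2 + M \log\left(\frac{d(y, \partial\Omega)}{d(x, \partial\Omega)}\right)$. -/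

import Mathlib

open Real Metric

theorem stmt_7 {n : ℕ} (Ω : Set (EuclideanSpace ℝ (Fin n)))
    (hΩo : IsOpen Ω) (hΩne : Ω.Nonempty) (hΩproper : Ω ≠ Set.univ)
    (M ℓ : ℝ) (hM : 1 ≤ M) (hℓ : 0 ≤ ℓ)
    (γ : ℝ → EuclideanSpace ℝ (Fin n))
    (hγΩ : ∀ t ∈ Set.Icc (0 : ℝ) ℓ, γ t ∈ Ω)
    (harc : ∀ s t : ℝ, ‖γ s - γ t‖ ≤ |s - t|)
    (hJohn : ∀ t ∈ Set.Icc (0 : ℝ) ℓ, t ≤ M * infDist (γ t) (frontier Ω))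
    (hend : ℓ ≤ M * infDist (γ ℓ) (frontier Ω))
    (hord : infDist (γ 0) (frontier Ω) ≤ infDist (γ ℓ) (frontier Ω)) :
    ∫ t in (0:ℝ)..ℓ, 1 / infDist (γ t) (frontier Ω) ≤
      1 + M ^ 2 + M * Real.log 2 +
        M * Real.log (infDist (γ ℓ) (frontier Ω) / infDist (γ 0) (frontier Ω)) := by
  have hSne : (frontier Ω).Nonempty := nonempty_frontier_iff.mpr ⟨hΩne, hΩproper⟩
  set f : ℝ → ℝ := fun t => infDist (γ t) (frontier Ω) with hfdef
  show (∫ t in (0:ℝ)..ℓ, 1 / f t) ≤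
      1 + M ^ 2 + M * Real.log 2 + M * Real.log (f ℓ / f 0)
  have hM0 : (0:ℝ) < M := lt_of_lt_of_le one_pos hM
  have hγlip : LipschitzWith 1 γ := LipschitzWith.of_dist_le_mul (fun s t => by
    simpa [dist_eq_norm, Real.dist_eq] using harc s t)
  have hflip : LipschitzWith 1 f := by
    have := (lipschitz_infDist_pt (s := frontier Ω)).comp hγlip
    simpa [hfdef, Function.comp_def] using this
  have hfcont : Continuous f := hflip.continuous
  have hdist : ∀ s t : ℝ, |f s - f t| ≤ |s - t| := fun s t => by
    have := hflip.dist_le_mul s t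
    simpa [Real.dist_eq] using this
  have hfpos : ∀ t ∈ Set.Icc (0:ℝ) ℓ, 0 < f t := by
    intro t ht
    refine (isClosed_frontier.notMem_iff_infDist_pos hSne).mp ?_
    intro hmem
    rw [hΩo.frontier_eq] at hmem
    exact hmem.2 (hγΩ t ht)
  have hD0 : 0 < f 0 := hfpos 0 ⟨le_refl 0, hℓ⟩
  have hDL : 0 < f ℓ := hfpos ℓ ⟨hℓ, le_refl ℓ⟩
  have hratio : 0 ≤ Real.log (f ℓ / f 0) := Real.log_nonneg ((one_le_div hD0).mpr hord)
  have hlog2 : 0 ≤ Real.log 2 := Real.log_nonneg one_le_two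
  have hInt : ∀ a b : ℝ, 0 ≤ a → a ≤ b → b ≤ ℓ →
      IntervalIntegrable (fun t => 1 / f t) MeasureTheory.volume a b := by
    intro a b ha hab hb
    apply ContinuousOn.intervalIntegrable
    apply ContinuousOn.div continuousOn_const hfcont.continuousOn
    intro t ht
    rw [Set.uIcc_of_le hab] at ht
    exact (hfpos t ⟨ha.trans ht.1, ht.2.trans hb⟩).ne'
  have hlow : ∀ t : ℝ, 0 ≤ t → f 0 - t ≤ f t := by
    intro t ht
    have h := hdist 0 t
    have h2 : f 0 - f t ≤ |f 0 - f t| := le_abs_self _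
    have h3 : |(0:ℝ) - t| = t := by rw [zero_sub, abs_neg, abs_of_nonneg ht]
    rw [h3] at h
    linarith
  have key : ∀ t ∈ Set.Icc (0:ℝ) (f 0 / 2), t ≤ ℓ → 1 / f t ≤ 2 / f 0 := by
    intro t ht htℓ
    have h1 : f 0 / 2 ≤ f t := by
      have := hlow t ht.1
      linarith [ht.2]
    calc 1 / f t ≤ 1 / (f 0 / 2) := one_div_le_one_div_of_le (by positivity) h1
      _ = 2 / f 0 := one_div_div (f 0) 2
  rcases le_or_gt ℓ (f 0 / 2) with hcase | hcase
  · -- short curve case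
    have hmono : (∫ t in (0:ℝ)..ℓ, 1 / f t) ≤ ∫ t in (0:ℝ)..ℓ, 2 / f 0 := by
      apply intervalIntegral.integral_mono_on hℓ (hInt 0 ℓ le_rfl hℓ le_rfl)
        intervalIntegrable_const
      intro t ht
      exact key t ⟨ht.1, ht.2.trans hcase⟩ ht.2
    rw [intervalIntegral.integral_const, smul_eq_mul] at hmono
    have h1 : (ℓ - 0) * (2 / f 0) ≤ 1 := by
      rw [sub_zero, mul_div_assoc']
      rw [div_le_one hD0]
      linarith
    nlinarith [mul_nonneg hM0.le hratio, mul_nonneg hM0.le hlog2, sq_nonneg M]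
  · -- long curve case: split at a = f 0 / 2
    set a : ℝ := f 0 / 2 with hadef
    have ha0 : 0 < a := by positivity
    have haℓ : a ≤ ℓ := hcase.le
    have hI1 := hInt 0 a le_rfl ha0.le haℓ
    have hI2 := hInt a ℓ ha0.le haℓ le_rfl
    have hsplit := intervalIntegral.integral_add_adjacent_intervals hI1 hI2
    -- first part ≤ 1
    have hpart1 : (∫ t in (0:ℝ)..a, 1 / f t) ≤ 1 := by
      have hmono : (∫ t in (0:ℝ)..a, 1 / f t) ≤ ∫ t in (0:ℝ)..a, 2 / f 0 := by
        apply intervalIntegral.integral_mono_on ha0.le hI1 intervalIntegrable_const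
        intro t ht
        exact key t ht (ht.2.trans haℓ)
      rw [intervalIntegral.integral_const, smul_eq_mul] at hmono
      have : (a - 0) * (2 / f 0) = 1 := by
        rw [hadef]; field_simp; ring
      linarith
    -- second part ≤ M * log (ℓ / a)
    have hIM : IntervalIntegrable (fun t => M / t) MeasureTheory.volume a ℓ := by
      apply ContinuousOn.intervalIntegrable
      apply ContinuousOn.div continuousOn_const continuousOn_id
      intro t ht
      rw [Set.uIcc_of_le haℓ] at ht
      exact (lt_of_lt_of_le ha0 ht.1).ne'
    have hpart2 : (∫ t in a..ℓ, 1 / f t) ≤ M * Real.log (ℓ / a) := by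
      have hmono : (∫ t in a..ℓ, 1 / f t) ≤ ∫ t in a..ℓ, M / t := by
        apply intervalIntegral.integral_mono_on haℓ hI2 hIM
        intro t ht
        have ht0 : 0 < t := lt_of_lt_of_le ha0 ht.1
        have hft : 0 < f t := hfpos t ⟨ht0.le, ht.2⟩
        rw [div_le_div_iff₀ hft ht0, one_mul]
        exact hJohn t ⟨ht0.le, ht.2⟩
      have hcalc : (∫ t in a..ℓ, M / t) = M * Real.log (ℓ / a) := by
        simp only [div_eq_mul_one_div M]
        rw [intervalIntegral.integral_const_mul, integral_one_div]
        intro h0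
        rw [Set.uIcc_of_le haℓ] at h0
        exact absurd h0.1 (not_le.mpr ha0)
      linarith [hcalc ▸ hmono]
    -- bound the log term
    have hle : ℓ / a ≤ 2 * M * (f ℓ / f 0) := by
      rw [div_le_iff₀ ha0, hadef]
      have h2 : 2 * M * (f ℓ / f 0) * (f 0 / 2) = M * f ℓ := by
        field_simp
      rw [h2]; exact hend
    have hℓpos : 0 < ℓ := lt_of_lt_of_le ha0 haℓ
    have hlapos : 0 < ℓ / a := by positivity
    have hlogb : Real.log (ℓ / a) ≤ Real.log 2 + Real.log M + Real.log (f ℓ / f 0) := by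
      calc Real.log (ℓ / a) ≤ Real.log (2 * M * (f ℓ / f 0)) := Real.log_le_log hlapos hle
        _ = Real.log (2 * M) + Real.log (f ℓ / f 0) := by
            rw [Real.log_mul (by positivity) (by positivity)]
        _ = Real.log 2 + Real.log M + Real.log (f ℓ / f 0) := by
            rw [Real.log_mul two_ne_zero hM0.ne']
    have hlogM : Real.log M ≤ M - 1 := Real.log_le_sub_one_of_pos hM0
    have hfin : M * Real.log (ℓ / a) ≤ M * Real.log 2 + M ^ 2 + M * Real.log (f ℓ / f 0) := by
      nlinarith [mul_le_mul_of_nonneg_left hlogb hM0.le]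
    linarith [hsplit ▸ (add_le_add hpart1 hpart2)]
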